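/- Let l ≥ 1 and let a, b, c : ℤ → ℂ be l-periodic sequences. Let p be an integer, let T = tr A_l(p), let D = det A_l(p), assume D ≠ 0, and let d be a complex number with d² = D. Then for every integer m ≥ 1, K_{lm−1}(p+1) = d^{m−1}·U_{m−1}(T/(2d))·K_{l−1}(p+1). -/
import Mathlib

open Matrix


/-- The continuant `K_n(p)` of the sequences `a b c : ℤ → ℂ`: the determinant of the
`n × n` tridiagonal matrix with diagonal `a_p, …, a_{p+n-1}`, superdiagonal
`b_p, …, b_{p+n-2}` and subdiagonal `c_p, …, c_{p+n-2}`; it equals `1` for `n = 0`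
and `0` for `n < 0`. -/
noncomputable def contK (a b c : ℤ → ℂ) (p n : ℤ) : ℂ :=
  if n < 0 then 0 else
    Matrix.det (Matrix.of fun i j : Fin n.toNat =>
      if (i : ℕ) = (j : ℕ) then a (p + (i : ℕ))
      else if (i : ℕ) + 1 = (j : ℕ) then b (p + (i : ℕ))
      else if (i : ℕ) = (j : ℕ) + 1 then c (p + (j : ℕ))
      else 0)

/-- The 2×2 matrix `L(α, β)` with first row `(α, β)` and second row `(1, 0)`. -/
def Lmat (α β : ℂ) : Matrix (Fin 2) (Fin 2) ℂ := !![α, β; 1, 0]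

/-- `A_n(p) = L(a_p, −b_p c_p) ⋯ L(a_{p+n−1}, −b_{p+n−1} c_{p+n−1})`. -/
noncomputable def Amat (a b c : ℤ → ℂ) (p : ℤ) (n : ℕ) : Matrix (Fin 2) (Fin 2) ℂ :=
  ((List.range n).map (fun i => Lmat (a (p + (i : ℕ))) (-(b (p + (i : ℕ)) * c (p + (i : ℕ)))))).prod

noncomputable def triM (a b c : ℤ → ℂ) (p : ℤ) (n : ℕ) : Matrix (Fin n) (Fin n) ℂ :=
  Matrix.of fun i j : Fin n =>
      if (i : ℕ) = (j : ℕ) then a (p + (i : ℕ))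
      else if (i : ℕ) + 1 = (j : ℕ) then b (p + (i : ℕ))
      else if (i : ℕ) = (j : ℕ) + 1 then c (p + (j : ℕ))
      else 0

lemma contK_nat (a b c : ℤ → ℂ) (p : ℤ) (n : ℕ) :
    contK a b c p n = (triM a b c p n).det := by
  rw [contK, if_neg (by simp)]; rfl

lemma contK_neg (a b c : ℤ → ℂ) (p n : ℤ) (h : n < 0) : contK a b c p n = 0 := by
  rw [contK, if_pos h]

lemma contK_zero (a b c : ℤ → ℂ) (p : ℤ) : contK a b c p 0 = 1 := by
  rw [show (0:ℤ) = ((0:ℕ):ℤ) by rfl, contK_nat, triM]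
  simp

lemma contK_one (a b c : ℤ → ℂ) (p : ℤ) : contK a b c p 1 = a p := by
  rw [show (1:ℤ) = ((1:ℕ):ℤ) by rfl, contK_nat, triM]
  simp

lemma triM_rec (a b c : ℤ → ℂ) (p : ℤ) (k : ℕ) :
    (triM a b c p (k+2)).det = a p * (triM a b c (p+1) (k+1)).det
      - b p * c p * (triM a b c (p+2) k).det := by
  rw [det_succ_row_zero, Fin.sum_univ_succ, Fin.sum_univ_succ]
  have hz : ∑ i : Fin k, (-1:ℂ) ^ ((i.succ.succ : Fin (k+2)) : ℕ) *
      triM a b c p (k+2) 0 i.succ.succ *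
      ((triM a b c p (k+2)).submatrix Fin.succ (i.succ.succ).succAbove).det = 0 := by
    apply Finset.sum_eq_zero
    intro i _
    have : triM a b c p (k+2) 0 i.succ.succ = 0 := by
      simp [triM, Fin.val_succ]
    rw [this]; ring
  rw [hz]
  have h00 : triM a b c p (k+2) 0 0 = a p := by simp [triM]
  have h01 : triM a b c p (k+2) 0 (0:Fin (k+1)).succ = b p := by simp [triM]
  have hsub0 : (triM a b c p (k+2)).submatrix Fin.succ ((0:Fin (k+2)).succAbove)
      = triM a b c (p+1) (k+1) := by
    ext i j
    simp only [triM, submatrix_apply, of_apply, Fin.succAbove_zero, Fin.val_succ]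
    split_ifs <;> first | rfl | omega | (congr 1; push_cast; omega)
  set D1 := (((0:Fin (k+1)).succ : Fin (k+2))).succAbove with hD1
  set N := (triM a b c p (k+2)).submatrix Fin.succ D1 with hNdef
  have hvalize : ∀ j : Fin k, ((D1 j.succ : Fin (k+2)) : ℕ) = (j:ℕ) + 2 := by
    intro j
    rw [hD1, Fin.succAbove_of_le_castSucc]
    · simp
    · simp [Fin.le_def]
  have hval0 : ((D1 0 : Fin (k+2)) : ℕ) = 0 := by
    rw [hD1, Fin.succAbove_of_castSucc_lt] <;> simp [Fin.lt_def]
  have hN00 : N 0 0 = c p := by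
    simp only [hNdef, submatrix_apply, triM, of_apply, Fin.val_succ, Fin.val_zero, hval0]
    simp
  have hNtail : ∀ i : Fin k, N i.succ 0 = 0 := by
    intro i
    simp only [hNdef, submatrix_apply, triM, of_apply, Fin.val_succ, hval0]
    split_ifs <;> first | omega | rfl | exact ‹False›.elim
  have hNsub : N.submatrix ((0:Fin (k+1)).succAbove) Fin.succ = triM a b c (p+2) k := by
    ext i j
    simp only [hNdef, submatrix_apply, triM, of_apply, Fin.succAbove_zero, Fin.val_succ,
      hvalize]
    split_ifs <;> first | rfl | omega | (congr 1; push_cast; omega)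
  have hdetN : N.det = c p * (triM a b c (p+2) k).det := by
    rw [det_succ_column_zero, Fin.sum_univ_succ]
    have hz2 : ∑ i : Fin k, (-1:ℂ) ^ ((i.succ : Fin (k+1)) : ℕ) * N i.succ 0 *
        (N.submatrix i.succ.succAbove Fin.succ).det = 0 := by
      apply Finset.sum_eq_zero
      intro i _
      rw [hNtail i]; ring
    rw [hz2, hN00, hNsub]
    simp
  rw [h00, h01, hsub0, hdetN]
  simp
  ring

lemma contK_rec (a b c : ℤ → ℂ) (p : ℤ) (n : ℕ) :
    contK a b c p ((n:ℤ)+1) = a p * contK a b c (p+1) n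
      - b p * c p * contK a b c (p+2) ((n:ℤ)-1) := by
  cases n with
  | zero =>
    simp only [Nat.cast_zero, zero_add, zero_sub]
    rw [contK_one, contK_zero, contK_neg _ _ _ _ _ (by norm_num)]
    ring
  | succ k =>
    have h1 : ((k:ℤ)+1)+1 = ((k+2:ℕ):ℤ) := by push_cast; ring
    have h2 : ((k+1:ℕ):ℤ) = ((k+1:ℕ):ℤ) := rfl
    have h3 : (((k+1:ℕ)):ℤ) - 1 = ((k:ℕ):ℤ) := by push_cast; ring
    rw [show ((k+1:ℕ):ℤ) + 1 = ((k+2:ℕ):ℤ) by push_cast; ring, h3,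
      contK_nat, contK_nat, contK_nat, triM_rec]

lemma Amat_succ_left (a b c : ℤ → ℂ) (p : ℤ) (n : ℕ) :
    Amat a b c p (n+1) = Lmat (a p) (-(b p * c p)) * Amat a b c (p+1) n := by
  rw [Amat, List.range_succ_eq_map, List.map_cons, List.prod_cons, List.map_map, Amat]
  congr 1
  · rw [show (p + ((0:ℕ):ℤ)) = p from by norm_num]
  · congr 1
    apply List.map_congr_left
    intro i _
    simp only [Function.comp_apply, Nat.succ_eq_add_one]
    rw [show (p + ((i+1:ℕ):ℤ)) = (p+1) + (i:ℕ) from by push_cast; ring]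

lemma amat_eq (a b c : ℤ → ℂ) : ∀ (n : ℕ) (p : ℤ), Amat a b c p (n+1) =
    !![contK a b c p ((n:ℤ)+1), -(b (p+(n:ℕ)) * c (p+(n:ℕ))) * contK a b c p n;
       contK a b c (p+1) n, -(b (p+(n:ℕ)) * c (p+(n:ℕ))) * contK a b c (p+1) ((n:ℤ)-1)] := by
  intro n
  induction n with
  | zero =>
    intro p
    rw [Amat_succ_left]
    show Lmat (a p) (-(b p * c p)) * 1 = _
    rw [mul_one, Lmat]
    simp only [Nat.cast_zero, zero_add, zero_sub, add_zero]
    rw [contK_one, contK_zero, contK_zero, contK_neg _ _ _ _ _ (by norm_num)]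
    norm_num
  | succ k ih =>
    intro p
    rw [Amat_succ_left, ih (p+1), Lmat, mul_fin_two]
    have e1 : (p+1) + (k:ℕ) = p + ((k+1:ℕ):ℤ) := by push_cast; ring
    have e2 : ((k+1:ℕ):ℤ) - 1 = (k:ℕ) := by push_cast; ring
    have e3 : ((k+1:ℕ):ℤ) + 1 = (k:ℤ) + 1 + 1 := by push_cast; ring
    rw [e1, e2, e3, show p+1+1 = p+2 from by ring,
      show ((k+1:ℕ):ℤ) = (k:ℤ)+1 from by push_cast; ring]
    have rec1 := contK_rec a b c p (k+1)
    have rec2 := contK_rec a b c p k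
    rw [show ((k+1:ℕ):ℤ) = (k:ℤ)+1 by push_cast; ring,
      show ((k:ℤ)+1) - 1 = ((k:ℕ):ℤ) by push_cast; ring] at rec1
    ext i j
    fin_cases i <;> fin_cases j <;>
      simp only [Fin.mk_zero, Fin.mk_one, Fin.isValue, Matrix.cons_val', Matrix.cons_val_zero,
        Matrix.cons_val_one, Matrix.head_cons, Matrix.head_fin_const, Matrix.cons_val_fin_one,
        Matrix.empty_val', Matrix.head_val', Matrix.of_apply]
    · linear_combination -rec1
    · linear_combination (b (p + ((k:ℤ)+1)) * c (p + ((k:ℤ)+1))) * rec2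
    · ring
    · ring


lemma Amat_add (a b c : ℤ → ℂ) (p : ℤ) (n k : ℕ) :
    Amat a b c p (n + k) = Amat a b c p n * Amat a b c (p + n) k := by
  rw [Amat, Amat, Amat, List.range_add, List.map_append, List.prod_append, List.map_map]
  congr 2
  apply List.map_congr_left
  intro i _
  simp only [Function.comp_apply]
  rw [show (p + ((n+i:ℕ):ℤ)) = (p + (n:ℕ)) + (i:ℕ) from by push_cast; ring]

lemma Amat_periodic (a b c : ℤ → ℂ) (l : ℕ)
    (ha : ∀ k : ℤ, a (k + l) = a k) (hb : ∀ k : ℤ, b (k + l) = b k)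
    (hc : ∀ k : ℤ, c (k + l) = c k) (p : ℤ) :
    Amat a b c (p + l) l = Amat a b c p l := by
  rw [Amat, Amat]
  congr 1
  apply List.map_congr_left
  intro i _
  rw [show (p + (l:ℕ) + (i:ℕ)) = (p + (i:ℕ)) + (l:ℕ) from by ring, ha, hb, hc]

lemma Amat_pow (a b c : ℤ → ℂ) (l : ℕ)
    (ha : ∀ k : ℤ, a (k + l) = a k) (hb : ∀ k : ℤ, b (k + l) = b k)
    (hc : ∀ k : ℤ, c (k + l) = c k) (p : ℤ) (m : ℕ) :
    Amat a b c p (l * m) = (Amat a b c p l) ^ m := by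
  induction m with
  | zero => simp [Amat]
  | succ j ih =>
    have hper : Amat a b c (p + (l * j : ℕ)) l = Amat a b c p l := by
      clear ih
      induction j with
      | zero => simp
      | succ i ihj =>
        rw [show (p + ((l * (i+1) : ℕ) : ℤ)) = (p + (l*i : ℕ)) + (l:ℕ) from by push_cast; ring,
          Amat_periodic a b c l ha hb hc, ihj]
    rw [Nat.mul_succ, Amat_add, hper, ih, pow_succ]

lemma CH_fin_two (B : Matrix (Fin 2) (Fin 2) ℂ) :
    B * B = B.trace • B - B.det • (1 : Matrix (Fin 2) (Fin 2) ℂ) := by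
  ext i j
  fin_cases i <;> fin_cases j <;>
    simp [Matrix.mul_apply, Fin.sum_univ_two, Matrix.trace_fin_two, Matrix.det_fin_two,
      Matrix.one_apply] <;> ring

lemma pow_cheb (B : Matrix (Fin 2) (Fin 2) ℂ) (d : ℂ) (hd : d ≠ 0)
    (hdet : B.det = d ^ 2) (m : ℕ) :
    B ^ (m + 1) = (d ^ m * (Polynomial.Chebyshev.U ℂ (m : ℤ)).eval (B.trace / (2 * d))) • B
      - (d ^ (m + 1) * (Polynomial.Chebyshev.U ℂ ((m : ℤ) - 1)).eval (B.trace / (2 * d)))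
        • (1 : Matrix (Fin 2) (Fin 2) ℂ) := by
  induction m with
  | zero =>
    simp [Polynomial.Chebyshev.U_zero, Polynomial.Chebyshev.U_neg_one]
  | succ j ih =>
    set x : ℂ := B.trace / (2 * d) with hx
    have hT : B.trace = 2 * d * x := by
      rw [hx]; field_simp
    have hU : (Polynomial.Chebyshev.U ℂ ((j:ℤ) + 1)).eval x
        = 2 * x * (Polynomial.Chebyshev.U ℂ (j:ℤ)).eval x
          - (Polynomial.Chebyshev.U ℂ ((j:ℤ) - 1)).eval x := by
      have := Polynomial.Chebyshev.U_add_two ℂ ((j:ℤ) - 1)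
      rw [show ((j:ℤ) - 1 + 2) = (j:ℤ) + 1 from by ring, show ((j:ℤ) - 1 + 1) = (j:ℤ) from by ring] at this
      rw [this]
      simp [Polynomial.eval_sub, Polynomial.eval_mul]
    rw [pow_succ, ih, sub_mul, smul_mul_assoc, smul_mul_assoc, one_mul, CH_fin_two, hdet]
    rw [smul_sub, smul_smul, smul_smul]
    have hcast : ((j+1 : ℕ) : ℤ) = (j:ℤ) + 1 := by push_cast; ring
    rw [hcast, show ((j:ℤ) + 1 - 1) = (j:ℤ) from by ring, sub_right_comm, ← sub_smul]
    congr 2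
    · rw [hU, hT]; ring
    · ring

/-- Periodic continuants (nonzero determinant case), second component: for `l`-periodic
sequences, with `T = tr A_l(p)`, `D = det A_l(p) ≠ 0` and `d² = D`, one has
`K_{lm−1}(p+1) = d^{m−1}·U_{m−1}(T/(2d))·K_{l−1}(p+1)` for all `m ≥ 1`. -/
theorem contK_periodic_det_ne_zero' (l : ℕ) (hl : 1 ≤ l) (a b c : ℤ → ℂ)
    (ha : ∀ k : ℤ, a (k + l) = a k) (hb : ∀ k : ℤ, b (k + l) = b k)
    (hc : ∀ k : ℤ, c (k + l) = c k) (p : ℤ) (T D d : ℂ)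
    (hT : T = (Amat a b c p l).trace) (hD : D = (Amat a b c p l).det)
    (hD0 : D ≠ 0) (hd : d ^ 2 = D) (m : ℕ) (hm : 1 ≤ m) :
    contK a b c (p + 1) ((l : ℤ) * m - 1) =
      d ^ (m - 1) * (Polynomial.Chebyshev.U ℂ ((m : ℤ) - 1)).eval (T / (2 * d))
        * contK a b c (p + 1) ((l : ℤ) - 1) := by
  obtain ⟨l', rfl⟩ : ∃ l', l = l' + 1 := ⟨l - 1, by omega⟩
  obtain ⟨m', rfl⟩ : ∃ m', m = m' + 1 := ⟨m - 1, by omega⟩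
  have hd0 : d ≠ 0 := fun h => hD0 (by rw [← hd, h]; ring)
  set B := Amat a b c p (l' + 1) with hB
  have hdet : B.det = d ^ 2 := by rw [hd, hD]
  have key : ∀ (n : ℕ), (Amat a b c p (n + 1)) 1 0 = contK a b c (p + 1) (n : ℤ) := by
    intro n
    rw [amat_eq]
    simp
  have hRHS : contK a b c (p + 1) (((l' + 1 : ℕ) : ℤ) - 1) = B 1 0 := by
    rw [hB, key l']
    congr 1
    push_cast
    ring
  have hLHS : contK a b c (p + 1) (((l' + 1 : ℕ) : ℤ) * ((m' + 1 : ℕ) : ℤ) - 1)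
      = (Amat a b c p ((l' + 1) * (m' + 1))) 1 0 := by
    have hn : (l' + 1) * (m' + 1) = ((l' + 1) * (m' + 1) - 1) + 1 := by
      have : 1 ≤ (l' + 1) * (m' + 1) := Nat.one_le_iff_ne_zero.2 (by positivity)
      omega
    rw [hn, key]
    congr 1
    have h1 : (1:ℕ) ≤ (l' + 1) * (m' + 1) := Nat.one_le_iff_ne_zero.2 (by positivity)
    rw [show (((l' + 1) * (m' + 1) - 1 : ℕ) : ℤ)
        = (((l' + 1) * (m' + 1) : ℕ) : ℤ) - 1 from by
      rw [Nat.cast_sub h1]; norm_num]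
    push_cast
    ring
  rw [hLHS, hRHS, Amat_pow a b c (l' + 1) ha hb hc p (m' + 1), ← hB,
    pow_cheb B d hd0 hdet m', hT]
  have e1 : (m' + 1) - 1 = m' := by omega
  have e2 : (((m' + 1 : ℕ) : ℤ)) - 1 = (m' : ℤ) := by push_cast; ring
  rw [e1, e2]
  simp [Matrix.sub_apply, Matrix.smul_apply, Matrix.one_apply]
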